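/- In 𝒲 = U(𝔤) ⊗ Cl(𝔤), the element 𝔇 = Σ_a u_a ⊗ x_a + 1 ⊗ γ satisfies 𝔇² = ½ Σ_a (u_a u_a) ⊗ 1 − (1/48)·(Σ_{a,b,c} f_{abc}²)·(1 ⊗ 1). -/

import Mathlib

open scoped TensorProduct

section DiracAux

variable {n : ℕ} {A : Type*} [Ring A] [Algebra ℝ A]

private lemma sum3_rot {M : Type*} [AddCommMonoid M] (F : Fin n → Fin n → Fin n → M) :
    ∑ a, ∑ b, ∑ c, F a b c = ∑ c, ∑ a, ∑ b, F a b c := by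
  calc ∑ a, ∑ b, ∑ c, F a b c = ∑ a, ∑ c, ∑ b, F a b c :=
        Finset.sum_congr rfl fun a _ => Finset.sum_comm
    _ = ∑ c, ∑ a, ∑ b, F a b c := Finset.sum_comm

private lemma sum4_to_prod {M : Type*} [AddCommMonoid M]
    (F : Fin n → Fin n → Fin n → Fin n → M) :
    ∑ a, ∑ b, ∑ c, ∑ d, F a b c d
      = ∑ p : Fin n × Fin n × Fin n × Fin n, F p.1 p.2.1 p.2.2.1 p.2.2.2 := by
  simp [Fintype.sum_prod_type]

private lemma sum4_swap14 {M : Type*} [AddCommMonoid M]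
    (F : Fin n → Fin n → Fin n → Fin n → M) :
    ∑ a, ∑ b, ∑ c, ∑ d, F a b c d = ∑ a, ∑ b, ∑ c, ∑ d, F d b c a := by
  rw [sum4_to_prod, sum4_to_prod]
  exact Fintype.sum_equiv
    ⟨fun p => (p.2.2.2, p.2.1, p.2.2.1, p.1), fun p => (p.2.2.2, p.2.1, p.2.2.1, p.1),
      fun ⟨a,b,c,d⟩ => rfl, fun ⟨a,b,c,d⟩ => rfl⟩ _ _ (fun ⟨a,b,c,d⟩ => rfl)

private lemma sum4_swap24 {M : Type*} [AddCommMonoid M]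
    (F : Fin n → Fin n → Fin n → Fin n → M) :
    ∑ a, ∑ b, ∑ c, ∑ d, F a b c d = ∑ a, ∑ b, ∑ c, ∑ d, F a d c b := by
  rw [sum4_to_prod, sum4_to_prod]
  exact Fintype.sum_equiv
    ⟨fun p => (p.1, p.2.2.2, p.2.2.1, p.2.1), fun p => (p.1, p.2.2.2, p.2.2.1, p.2.1),
      fun ⟨a,b,c,d⟩ => rfl, fun ⟨a,b,c,d⟩ => rfl⟩ _ _ (fun ⟨a,b,c,d⟩ => rfl)

private lemma sum4_swap34 {M : Type*} [AddCommMonoid M]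
    (F : Fin n → Fin n → Fin n → Fin n → M) :
    ∑ a, ∑ b, ∑ c, ∑ d, F a b c d = ∑ a, ∑ b, ∑ c, ∑ d, F a b d c := by
  rw [sum4_to_prod, sum4_to_prod]
  exact Fintype.sum_equiv
    ⟨fun p => (p.1, p.2.1, p.2.2.2, p.2.2.1), fun p => (p.1, p.2.1, p.2.2.2, p.2.2.1),
      fun ⟨a,b,c,d⟩ => rfl, fun ⟨a,b,c,d⟩ => rfl⟩ _ _ (fun ⟨a,b,c,d⟩ => rfl)

variable (x : Fin n → A) (f : Fin n → Fin n → Fin n → ℝ) (G : Fin n → A) (γ : A)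

private theorem cl_triple' (hswap : ∀ a b, x a * x b = (if a = b then (1:ℝ) else 0) • 1 - x b * x a)
    (r s b : Fin n) :
    x r * x s * x b = (if s = b then (1:ℝ) else 0) • x r - (if r = b then (1:ℝ) else 0) • x s
      + x b * (x r * x s) := by
  rw [mul_assoc, hswap s b, mul_sub, mul_smul_comm, mul_one, ← mul_assoc, hswap r b,
    sub_mul, smul_mul_assoc, one_mul, mul_assoc]
  abel

private theorem cl_anti4' (hswap : ∀ a b, x a * x b = (if a = b then (1:ℝ) else 0) • 1 - x b * x a)
    (a b c d : Fin n) :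
    x a * (x b * x c * x d) + (x b * x c * x d) * x a
      = (if a = b then (1:ℝ) else 0) • (x c * x d)
        - (if a = c then (1:ℝ) else 0) • (x b * x d)
        + (if a = d then (1:ℝ) else 0) • (x b * x c) := by
  have ec : ∀ (p q : Fin n), (if p = q then (1:ℝ) else 0) = (if q = p then (1:ℝ) else 0) := by
    intro p q; simp [eq_comm]
  have h2 := cl_triple' x hswap c d a
  have h3 : (x b * x c * x d) * x a = x b * (x c * x d * x a) := by noncomm_ring
  rw [h3, h2, mul_add, mul_sub, mul_smul_comm, mul_smul_comm]
  have h4 : x b * (x a * (x c * x d)) = (x b * x a) * (x c * x d) := by noncomm_ring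
  rw [h4, hswap b a, sub_mul, smul_mul_assoc, one_mul]
  have h5 : x a * x b * (x c * x d) = x a * (x b * x c * x d) := by noncomm_ring
  rw [h5, ec d a, ec c a, ec b a]
  abel

private theorem gx_comm'
    (hanti2 : ∀ a b c, f a c b = - f a b c)
    (hswap : ∀ a b, x a * x b = (if a = b then (1:ℝ) else 0) • 1 - x b * x a)
    (hG : ∀ a, G a = (-(1/2:ℝ)) • ∑ r, ∑ s, f a r s • (x r * x s)) :
    ∀ a b, G a * x b = x b * G a + ∑ c, f a b c • x c := by
  intro a b
  have key : (∑ r, ∑ s, f a r s • (x r * x s)) * x b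
      = (- ∑ c, f a b c • x c) + (- ∑ c, f a b c • x c)
        + x b * (∑ r, ∑ s, f a r s • (x r * x s)) := by
    calc (∑ r, ∑ s, f a r s • (x r * x s)) * x b
        = ∑ r, ∑ s, f a r s • (x r * x s * x b) := by
          rw [Finset.sum_mul]
          exact Finset.sum_congr rfl fun r _ => by
            rw [Finset.sum_mul]
            exact Finset.sum_congr rfl fun s _ => smul_mul_assoc _ _ _
      _ = ∑ r, ∑ s, (f a r s • ((if s = b then (1:ℝ) else 0) • x r)
            - f a r s • ((if r = b then (1:ℝ) else 0) • x s)
            + f a r s • (x b * (x r * x s))) := by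
          exact Finset.sum_congr rfl fun r _ => Finset.sum_congr rfl fun s _ => by
            rw [cl_triple' x hswap r s b, smul_add, smul_sub]
      _ = (∑ r, ∑ s, f a r s • ((if s = b then (1:ℝ) else 0) • x r))
            - (∑ r, ∑ s, f a r s • ((if r = b then (1:ℝ) else 0) • x s))
            + (∑ r, ∑ s, f a r s • (x b * (x r * x s))) := by
          simp [Finset.sum_add_distrib, Finset.sum_sub_distrib]
      _ = (- ∑ c, f a b c • x c) + (- ∑ c, f a b c • x c)
            + x b * (∑ r, ∑ s, f a r s • (x r * x s)) := by
          have e1 : (∑ r, ∑ s, f a r s • ((if s = b then (1:ℝ) else 0) • x r))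
              = - ∑ c, f a b c • x c := by
            rw [← Finset.sum_neg_distrib]
            refine Finset.sum_congr rfl fun r _ => ?_
            simp only [ite_smul, one_smul, zero_smul, smul_ite, smul_zero,
              Finset.sum_ite_eq', Finset.mem_univ, if_true]
            rw [hanti2 a b r, neg_smul]
          have e2 : (∑ r, ∑ s, f a r s • ((if r = b then (1:ℝ) else 0) • x s))
              = ∑ c, f a b c • x c := by
            rw [Finset.sum_comm]
            refine Finset.sum_congr rfl fun s _ => ?_
            simp only [ite_smul, one_smul, zero_smul, smul_ite, smul_zero,
              Finset.sum_ite_eq', Finset.mem_univ, if_true]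
          have e3 : (∑ r, ∑ s, f a r s • (x b * (x r * x s)))
              = x b * (∑ r, ∑ s, f a r s • (x r * x s)) := by
            simp [Finset.mul_sum, mul_smul_comm]
          rw [e1, e2, e3]; abel
  rw [hG a, smul_mul_assoc, key, smul_add, smul_add, mul_smul_comm]
  module

private theorem xgamma_anti'
    (hanti1 : ∀ a b c, f b a c = - f a b c)
    (hcyc : ∀ a b c, f a b c = f b c a)
    (hswap : ∀ a b, x a * x b = (if a = b then (1:ℝ) else 0) • 1 - x b * x a)
    (hG : ∀ a, G a = (-(1/2:ℝ)) • ∑ r, ∑ s, f a r s • (x r * x s))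
    (hγ : γ = (-(1/6:ℝ)) • ∑ a, ∑ b, ∑ c, f a b c • (x a * x b * x c)) :
    ∀ a, x a * γ + γ * x a = G a := by
  have hGm : ∀ a, (∑ r, ∑ s, f a r s • (x r * x s)) = (-2:ℝ) • G a := by
    intro a; rw [hG a, smul_smul]; norm_num
  intro a
  have h1 : x a * γ + γ * x a
      = (-(1/6:ℝ)) • ∑ b, ∑ c, ∑ d, f b c d •
          (x a * (x b * x c * x d) + (x b * x c * x d) * x a) := by
    rw [hγ, mul_smul_comm, smul_mul_assoc, ← smul_add]
    congr 1
    rw [Finset.mul_sum, Finset.sum_mul, ← Finset.sum_add_distrib]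
    refine Finset.sum_congr rfl fun b _ => ?_
    rw [Finset.mul_sum, Finset.sum_mul, ← Finset.sum_add_distrib]
    refine Finset.sum_congr rfl fun c _ => ?_
    rw [Finset.mul_sum, Finset.sum_mul, ← Finset.sum_add_distrib]
    refine Finset.sum_congr rfl fun d _ => ?_
    rw [mul_smul_comm, smul_mul_assoc, ← smul_add]
  rw [h1]
  have h2 : ∑ b, ∑ c, ∑ d, f b c d •
      (x a * (x b * x c * x d) + (x b * x c * x d) * x a)
      = (∑ b, ∑ c, ∑ d, f b c d • ((if a = b then (1:ℝ) else 0) • (x c * x d)))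
        - (∑ b, ∑ c, ∑ d, f b c d • ((if a = c then (1:ℝ) else 0) • (x b * x d)))
        + (∑ b, ∑ c, ∑ d, f b c d • ((if a = d then (1:ℝ) else 0) • (x b * x c))) := by
    refine Eq.trans (Finset.sum_congr rfl fun b _ => Finset.sum_congr rfl fun c _ =>
      Finset.sum_congr rfl fun d _ => by
        rw [cl_anti4' x hswap a b c d, smul_add, smul_sub]) ?_
    simp [Finset.sum_add_distrib, Finset.sum_sub_distrib]
  rw [h2]
  have w1 : (∑ b, ∑ c, ∑ d, f b c d • ((if a = b then (1:ℝ) else 0) • (x c * x d)))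
      = (-2:ℝ) • G a := by
    rw [← hGm a]
    rw [show (∑ b, ∑ c, ∑ d, f b c d • ((if a = b then (1:ℝ) else 0) • (x c * x d)))
        = ∑ b, (if a = b then (∑ c, ∑ d, f b c d • (x c * x d)) else 0) from
      Finset.sum_congr rfl fun b _ => by by_cases h : a = b <;> simp [h]]
    simp [Finset.sum_ite_eq, Finset.mem_univ]
  have w2 : (∑ b, ∑ c, ∑ d, f b c d • ((if a = c then (1:ℝ) else 0) • (x b * x d)))
      = -((-2:ℝ) • G a) := by
    rw [← hGm a, ← Finset.sum_neg_distrib]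
    refine Finset.sum_congr rfl fun b _ => ?_
    rw [show (∑ c, ∑ d, f b c d • ((if a = c then (1:ℝ) else 0) • (x b * x d)))
        = ∑ c, (if a = c then (∑ d, f b c d • (x b * x d)) else 0) from
      Finset.sum_congr rfl fun c _ => by by_cases h : a = c <;> simp [h]]
    simp only [Finset.sum_ite_eq, Finset.mem_univ, if_true]
    rw [← Finset.sum_neg_distrib]
    refine Finset.sum_congr rfl fun d _ => ?_
    rw [hanti1 b a d, neg_smul, neg_neg]
  have w3 : (∑ b, ∑ c, ∑ d, f b c d • ((if a = d then (1:ℝ) else 0) • (x b * x c)))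
      = (-2:ℝ) • G a := by
    rw [← hGm a]
    refine Finset.sum_congr rfl fun b _ => Finset.sum_congr rfl fun c _ => ?_
    rw [show (∑ d, f b c d • ((if a = d then (1:ℝ) else 0) • (x b * x c)))
        = ∑ d, (if a = d then f b c d • (x b * x c) else 0) from
      Finset.sum_congr rfl fun d _ => by by_cases h : a = d <;> simp [h]]
    simp only [Finset.sum_ite_eq, Finset.mem_univ, if_true]
    rw [← hcyc a b c]
  rw [w1, w2, w3]
  module

private theorem g_gamma_comm'
    (hanti2 : ∀ a b c, f a c b = - f a b c)
    (hjac0 : ∀ a b c d, (∑ k, f b c k * f a k d) = ∑ k, (f a b k * f k c d + f a c k * f b k d))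
    (hgx : ∀ a b, G a * x b = x b * G a + ∑ c, f a b c • x c)
    (hγ : γ = (-(1/6:ℝ)) • ∑ a, ∑ b, ∑ c, f a b c • (x a * x b * x c)) :
    ∀ a, γ * G a = G a * γ := by
  intro a
  have h3 : ∀ b c d, G a * (x b * x c * x d)
      = (x b * x c * x d) * G a
        + ((∑ k, f a b k • (x k * x c * x d))
        + (∑ k, f a c k • (x b * x k * x d))
        + (∑ k, f a d k • (x b * x c * x k))) := by
    intro b c d
    have q1 : ((∑ k, f a b k • x k) * x c) * x d = ∑ k, f a b k • (x k * x c * x d) := by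
      rw [Finset.sum_mul, Finset.sum_mul]
      exact Finset.sum_congr rfl fun k _ => by rw [smul_mul_assoc, smul_mul_assoc]
    have q2 : (x b * (∑ k, f a c k • x k)) * x d = ∑ k, f a c k • (x b * x k * x d) := by
      rw [Finset.mul_sum, Finset.sum_mul]
      exact Finset.sum_congr rfl fun k _ => by rw [mul_smul_comm, smul_mul_assoc]
    have q3 : (x b * x c) * (∑ k, f a d k • x k) = ∑ k, f a d k • (x b * x c * x k) := by
      rw [Finset.mul_sum]
      exact Finset.sum_congr rfl fun k _ => by rw [mul_smul_comm]
    calc G a * (x b * x c * x d) = ((G a * x b) * x c) * x d := by noncomm_ring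
      _ = ((x b * G a) * x c) * x d + ((∑ k, f a b k • x k) * x c) * x d := by
          rw [hgx a b, add_mul, add_mul]
      _ = (x b * (G a * x c)) * x d + ((∑ k, f a b k • x k) * x c) * x d := by
          rw [mul_assoc (x b)]
      _ = (x b * (x c * G a)) * x d + (x b * (∑ k, f a c k • x k)) * x d
            + ((∑ k, f a b k • x k) * x c) * x d := by
          rw [hgx a c, mul_add, add_mul]
      _ = (x b * x c) * (G a * x d) + (x b * (∑ k, f a c k • x k)) * x d
            + ((∑ k, f a b k • x k) * x c) * x d := by
          rw [show (x b * (x c * G a)) * x d = (x b * x c) * (G a * x d) by noncomm_ring]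
      _ = (x b * x c) * (x d * G a) + (x b * x c) * (∑ k, f a d k • x k)
            + (x b * (∑ k, f a c k • x k)) * x d
            + ((∑ k, f a b k • x k) * x c) * x d := by
          rw [hgx a d, mul_add]
      _ = (x b * x c * x d) * G a
            + ((∑ k, f a b k • (x k * x c * x d))
            + (∑ k, f a c k • (x b * x k * x d))
            + (∑ k, f a d k • (x b * x c * x k))) := by
          rw [q1, q2, q3, show (x b * x c) * (x d * G a) = (x b * x c * x d) * G a by
            noncomm_ring]
          abel
  have hjacX : ∀ b c d, (∑ k, (f k c d * f a k b + f b k d * f a k c + f b c k * f a k d))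
      = 0 := by
    intro b c d
    calc (∑ k, (f k c d * f a k b + f b k d * f a k c + f b c k * f a k d))
        = (∑ k, (f k c d * f a k b + f b k d * f a k c)) + ∑ k, f b c k * f a k d :=
          Finset.sum_add_distrib
      _ = ∑ k, ((f k c d * f a k b + f b k d * f a k c)
            + (f a b k * f k c d + f a c k * f b k d)) := by
          rw [hjac0 a b c d, ← Finset.sum_add_distrib]
      _ = 0 := Finset.sum_eq_zero fun k _ => by
          rw [hanti2 a b k, hanti2 a c k]; ring
  have hZ : (∑ b, ∑ c, ∑ d, f b c d • ((∑ k, f a b k • (x k * x c * x d))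
        + (∑ k, f a c k • (x b * x k * x d))
        + (∑ k, f a d k • (x b * x c * x k)))) = 0 := by
    have expand : (∑ b, ∑ c, ∑ d, f b c d • ((∑ k, f a b k • (x k * x c * x d))
        + (∑ k, f a c k • (x b * x k * x d))
        + (∑ k, f a d k • (x b * x c * x k))))
        = (∑ b, ∑ c, ∑ d, ∑ k, (f b c d * f a b k) • (x k * x c * x d))
          + (∑ b, ∑ c, ∑ d, ∑ k, (f b c d * f a c k) • (x b * x k * x d))
          + (∑ b, ∑ c, ∑ d, ∑ k, (f b c d * f a d k) • (x b * x c * x k)) := by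
      simp only [smul_add, Finset.smul_sum, smul_smul, Finset.sum_add_distrib]
    rw [expand,
      sum4_swap14 (fun b c d k => (f b c d * f a b k) • (x k * x c * x d)),
      sum4_swap24 (fun b c d k => (f b c d * f a c k) • (x b * x k * x d)),
      sum4_swap34 (fun b c d k => (f b c d * f a d k) • (x b * x c * x k))]
    simp only [← Finset.sum_add_distrib]
    refine Finset.sum_eq_zero fun b _ => Finset.sum_eq_zero fun c _ =>
      Finset.sum_eq_zero fun d _ => ?_
    rw [show (∑ k, ((f k c d * f a k b) • (x b * x c * x d)
        + (f b k d * f a k c) • (x b * x c * x d)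
        + (f b c k * f a k d) • (x b * x c * x d)))
      = (∑ k, (f k c d * f a k b + f b k d * f a k c + f b c k * f a k d))
          • (x b * x c * x d) from by
        rw [Finset.sum_smul]
        exact Finset.sum_congr rfl fun k _ => by rw [add_smul, add_smul]]
    rw [hjacX b c d, zero_smul]
  have hγG : γ * G a = (-(1/6:ℝ)) • ∑ b, ∑ c, ∑ d, f b c d • ((x b * x c * x d) * G a) := by
    rw [hγ, smul_mul_assoc]
    congr 1
    rw [Finset.sum_mul]
    refine Finset.sum_congr rfl fun b _ => ?_
    rw [Finset.sum_mul]
    refine Finset.sum_congr rfl fun c _ => ?_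
    rw [Finset.sum_mul]
    exact Finset.sum_congr rfl fun d _ => smul_mul_assoc _ _ _
  have hGγ2 : G a * γ = (-(1/6:ℝ)) • ∑ b, ∑ c, ∑ d, f b c d • (G a * (x b * x c * x d)) := by
    rw [hγ, mul_smul_comm]
    congr 1
    rw [Finset.mul_sum]
    refine Finset.sum_congr rfl fun b _ => ?_
    rw [Finset.mul_sum]
    refine Finset.sum_congr rfl fun c _ => ?_
    rw [Finset.mul_sum]
    exact Finset.sum_congr rfl fun d _ => (mul_smul_comm _ _ _)
  rw [hγG, hGγ2]
  congr 1
  refine Eq.symm ?_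
  calc ∑ b, ∑ c, ∑ d, f b c d • (G a * (x b * x c * x d))
      = (∑ b, ∑ c, ∑ d, f b c d • ((x b * x c * x d) * G a))
        + ∑ b, ∑ c, ∑ d, f b c d • ((∑ k, f a b k • (x k * x c * x d))
          + (∑ k, f a c k • (x b * x k * x d))
          + (∑ k, f a d k • (x b * x c * x k))) := by
        rw [← Finset.sum_add_distrib]
        refine Finset.sum_congr rfl fun b _ => ?_
        rw [← Finset.sum_add_distrib]
        refine Finset.sum_congr rfl fun c _ => ?_
        rw [← Finset.sum_add_distrib]
        refine Finset.sum_congr rfl fun d _ => ?_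
        rw [h3 b c d, smul_add]
    _ = ∑ b, ∑ c, ∑ d, f b c d • ((x b * x c * x d) * G a) := by rw [hZ, add_zero]

private theorem xg3'
    (hG : ∀ a, G a = (-(1/2:ℝ)) • ∑ r, ∑ s, f a r s • (x r * x s))
    (hγ : γ = (-(1/6:ℝ)) • ∑ a, ∑ b, ∑ c, f a b c • (x a * x b * x c)) :
    ∑ a, x a * G a = (3:ℝ) • γ := by
  have key : ∀ a, x a * G a = (-(1/2:ℝ)) • ∑ b, ∑ c, f a b c • (x a * x b * x c) := by
    intro a; rw [hG a, mul_smul_comm]; congr 1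
    rw [Finset.mul_sum]; refine Finset.sum_congr rfl fun b _ => ?_
    rw [Finset.mul_sum]; refine Finset.sum_congr rfl fun c _ => ?_
    rw [mul_smul_comm, ← mul_assoc]
  calc ∑ a, x a * G a
      = ∑ a, (-(1/2:ℝ)) • ∑ b, ∑ c, f a b c • (x a * x b * x c) :=
        Finset.sum_congr rfl fun a _ => key a
    _ = (-(1/2:ℝ)) • ∑ a, ∑ b, ∑ c, f a b c • (x a * x b * x c) := by
        rw [Finset.smul_sum]
    _ = (3:ℝ) • γ := by rw [hγ, smul_smul]; norm_num

private theorem eq_one'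
    (hxγ : ∀ a, x a * γ + γ * x a = G a)
    (hGγ : ∀ a, γ * G a = G a * γ)
    (h3 : ∑ a, x a * G a = (3:ℝ) • γ) :
    (6:ℝ) • (γ * γ) = ∑ a, G a * G a := by
  have hγx : ∀ a, γ * x a = G a - x a * γ := by
    intro a
    have := hxγ a
    rw [add_comm] at this
    exact eq_sub_of_add_eq this
  have e : (3:ℝ) • (γ * γ) = (∑ a, G a * G a) - (3:ℝ) • (γ * γ) := by
    calc (3:ℝ) • (γ * γ) = γ * ((3:ℝ) • γ) := (mul_smul_comm _ _ _).symm
      _ = γ * ∑ a, x a * G a := by rw [h3]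
      _ = ∑ a, γ * (x a * G a) := Finset.mul_sum _ _ _
      _ = ∑ a, (G a * G a - x a * (G a * γ)) := by
          refine Finset.sum_congr rfl fun a _ => ?_
          rw [← mul_assoc, hγx a, sub_mul, mul_assoc, hGγ a]
      _ = (∑ a, G a * G a) - ∑ a, x a * (G a * γ) := Finset.sum_sub_distrib _ _
      _ = (∑ a, G a * G a) - (3:ℝ) • (γ * γ) := by
          congr 1
          calc ∑ a, x a * (G a * γ) = (∑ a, x a * G a) * γ := by
                rw [Finset.sum_mul]
                exact Finset.sum_congr rfl fun a _ => (mul_assoc _ _ _).symm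
            _ = ((3:ℝ) • γ) * γ := by rw [h3]
            _ = (3:ℝ) • (γ * γ) := smul_mul_assoc _ _ _
  have e2 := eq_sub_iff_add_eq.mp e
  rw [show (6:ℝ) • (γ * γ) = (3:ℝ) • (γ * γ) + (3:ℝ) • (γ * γ) by module, e2]

private theorem eq_two'
    (hanti1 : ∀ a b c, f b a c = - f a b c)
    (hcyc : ∀ a b c, f a b c = f b c a)
    (hG : ∀ a, G a = (-(1/2:ℝ)) • ∑ r, ∑ s, f a r s • (x r * x s))
    (hgx : ∀ a b, G a * x b = x b * G a + ∑ c, f a b c • x c)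
    (hxγ : ∀ a, x a * γ + γ * x a = G a)
    (hγ : γ = (-(1/6:ℝ)) • ∑ a, ∑ b, ∑ c, f a b c • (x a * x b * x c)) :
    (2:ℝ) • (γ * γ) = (∑ a, G a * G a)
      + (1/6:ℝ) • ∑ p, ∑ q, ∑ r, ∑ c, (f p q r * f p q c) • (x c * x r) := by
  have hGm : ∀ a, (∑ r, ∑ s, f a r s • (x r * x s)) = (-2:ℝ) • G a := by
    intro a; rw [hG a, smul_smul]; norm_num
  have hγx : ∀ a, γ * x a = G a - x a * γ := by
    intro a; have := hxγ a; rw [add_comm] at this; exact eq_sub_of_add_eq this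
  have hxG : ∀ p q, x p * G q = G q * x p - ∑ c, f q p c • x c := fun p q =>
    eq_sub_of_add_eq (hgx q p).symm
  have hpt : ∀ p q r, γ * (x p * x q * x r) + (x p * x q * x r) * γ
      = G p * (x q * x r) - (x p * G q) * x r + (x p * x q) * G r := by
    intro p q r
    have key : γ * (x p * x q * x r)
        = G p * (x q * x r) - (x p * G q) * x r + (x p * x q) * G r
          - (x p * x q * x r) * γ := by
      calc γ * (x p * x q * x r) = ((γ * x p) * x q) * x r := by noncomm_ring
        _ = ((G p - x p * γ) * x q) * x r := by rw [hγx p]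
        _ = G p * (x q * x r) - (x p * (γ * x q)) * x r := by noncomm_ring
        _ = G p * (x q * x r) - (x p * (G q - x q * γ)) * x r := by rw [hγx q]
        _ = G p * (x q * x r) - (x p * G q) * x r + (x p * x q) * (γ * x r) := by
            noncomm_ring
        _ = G p * (x q * x r) - (x p * G q) * x r + (x p * x q) * (G r - x r * γ) := by
            rw [hγx r]
        _ = G p * (x q * x r) - (x p * G q) * x r + (x p * x q) * G r
              - (x p * x q * x r) * γ := by noncomm_ring
    rw [key]; abel
  have hγγ1 : γ * γ = (-(1/6:ℝ)) • ∑ p, ∑ q, ∑ r, f p q r • (γ * (x p * x q * x r)) := by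
    conv_lhs => rw [show γ * γ = γ * ((-(1/6:ℝ)) • ∑ a, ∑ b, ∑ c, f a b c • (x a * x b * x c))
      from by rw [← hγ]]
    rw [mul_smul_comm]
    congr 1
    rw [Finset.mul_sum]
    refine Finset.sum_congr rfl fun p _ => ?_
    rw [Finset.mul_sum]
    refine Finset.sum_congr rfl fun q _ => ?_
    rw [Finset.mul_sum]
    exact Finset.sum_congr rfl fun r _ => mul_smul_comm _ _ _
  have hγγ2 : γ * γ = (-(1/6:ℝ)) • ∑ p, ∑ q, ∑ r, f p q r • ((x p * x q * x r) * γ) := by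
    conv_lhs => rw [show γ * γ = ((-(1/6:ℝ)) • ∑ a, ∑ b, ∑ c, f a b c • (x a * x b * x c)) * γ
      from by rw [← hγ]]
    rw [smul_mul_assoc]
    congr 1
    rw [Finset.sum_mul]
    refine Finset.sum_congr rfl fun p _ => ?_
    rw [Finset.sum_mul]
    refine Finset.sum_congr rfl fun q _ => ?_
    rw [Finset.sum_mul]
    exact Finset.sum_congr rfl fun r _ => smul_mul_assoc _ _ _
  have hsum : (2:ℝ) • (γ * γ)
      = (-(1/6:ℝ)) • ((∑ p, ∑ q, ∑ r, f p q r • (G p * (x q * x r)))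
          - (∑ p, ∑ q, ∑ r, f p q r • ((x p * G q) * x r))
          + (∑ p, ∑ q, ∑ r, f p q r • ((x p * x q) * G r))) := by
    have : (2:ℝ) • (γ * γ)
        = (-(1/6:ℝ)) • ∑ p, ∑ q, ∑ r, f p q r •
            (γ * (x p * x q * x r) + (x p * x q * x r) * γ) := by
      calc (2:ℝ) • (γ * γ) = γ * γ + γ * γ := by module
        _ = (-(1/6:ℝ)) • ((∑ p, ∑ q, ∑ r, f p q r • (γ * (x p * x q * x r)))
              + ∑ p, ∑ q, ∑ r, f p q r • ((x p * x q * x r) * γ)) := by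
            rw [smul_add, ← hγγ1, ← hγγ2]
        _ = (-(1/6:ℝ)) • ∑ p, ∑ q, ∑ r, f p q r •
              (γ * (x p * x q * x r) + (x p * x q * x r) * γ) := by
            congr 1
            rw [← Finset.sum_add_distrib]
            refine Finset.sum_congr rfl fun p _ => ?_
            rw [← Finset.sum_add_distrib]
            refine Finset.sum_congr rfl fun q _ => ?_
            rw [← Finset.sum_add_distrib]
            exact Finset.sum_congr rfl fun r _ => (smul_add _ _ _).symm
    rw [this]
    congr 1
    calc ∑ p, ∑ q, ∑ r, f p q r • (γ * (x p * x q * x r) + (x p * x q * x r) * γ)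
        = ∑ p, ∑ q, ∑ r, (f p q r • (G p * (x q * x r))
            - f p q r • ((x p * G q) * x r) + f p q r • ((x p * x q) * G r)) := by
          refine Finset.sum_congr rfl fun p _ => Finset.sum_congr rfl fun q _ =>
            Finset.sum_congr rfl fun r _ => ?_
          rw [hpt p q r, smul_add, smul_sub]
      _ = _ := by simp [Finset.sum_add_distrib, Finset.sum_sub_distrib]
  have hS1 : (∑ p, ∑ q, ∑ r, f p q r • (G p * (x q * x r)))
      = (-2:ℝ) • ∑ a, G a * G a := by
    rw [Finset.smul_sum]
    refine Finset.sum_congr rfl fun p _ => ?_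
    calc ∑ q, ∑ r, f p q r • (G p * (x q * x r))
        = G p * ∑ q, ∑ r, f p q r • (x q * x r) := by
          rw [Finset.mul_sum]
          refine Finset.sum_congr rfl fun q _ => ?_
          rw [Finset.mul_sum]
          exact Finset.sum_congr rfl fun r _ => (mul_smul_comm _ _ _).symm
      _ = G p * ((-2:ℝ) • G p) := by rw [hGm p]
      _ = (-2:ℝ) • (G p * G p) := mul_smul_comm _ _ _
  have hS3 : (∑ p, ∑ q, ∑ r, f p q r • ((x p * x q) * G r))
      = (-2:ℝ) • ∑ a, G a * G a := by
    rw [sum3_rot (fun p q r => f p q r • ((x p * x q) * G r)), Finset.smul_sum]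
    refine Finset.sum_congr rfl fun r _ => ?_
    calc ∑ p, ∑ q, f p q r • ((x p * x q) * G r)
        = (∑ p, ∑ q, f r p q • (x p * x q)) * G r := by
          rw [Finset.sum_mul]
          refine Finset.sum_congr rfl fun p _ => ?_
          rw [Finset.sum_mul]
          refine Finset.sum_congr rfl fun q _ => ?_
          rw [smul_mul_assoc, hcyc p q r, hcyc q r p]
      _ = ((-2:ℝ) • G r) * G r := by rw [hGm r]
      _ = (-2:ℝ) • (G r * G r) := smul_mul_assoc _ _ _
  have hS2 : (∑ p, ∑ q, ∑ r, f p q r • ((x p * G q) * x r))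
      = (2:ℝ) • (∑ a, G a * G a)
        - (- ∑ p, ∑ q, ∑ r, ∑ c, (f p q r * f p q c) • (x c * x r)) := by
    have step1 : (∑ p, ∑ q, ∑ r, f p q r • ((x p * G q) * x r))
        = (∑ p, ∑ q, ∑ r, f p q r • (G q * (x p * x r)))
          - ∑ p, ∑ q, ∑ r, ∑ c, (f p q r * f q p c) • (x c * x r) := by
      rw [← Finset.sum_sub_distrib]
      refine Finset.sum_congr rfl fun p _ => ?_
      rw [← Finset.sum_sub_distrib]
      refine Finset.sum_congr rfl fun q _ => ?_
      rw [← Finset.sum_sub_distrib]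
      refine Finset.sum_congr rfl fun r _ => ?_
      rw [hxG p q, sub_mul, mul_assoc, smul_sub]
      congr 1
      rw [Finset.sum_mul, Finset.smul_sum]
      exact Finset.sum_congr rfl fun c _ => by rw [smul_mul_assoc, smul_smul]
    have step2 : (∑ p, ∑ q, ∑ r, f p q r • (G q * (x p * x r)))
        = (2:ℝ) • ∑ a, G a * G a := by
      rw [Finset.sum_comm, Finset.smul_sum]
      refine Finset.sum_congr rfl fun q _ => ?_
      calc ∑ p, ∑ r, f p q r • (G q * (x p * x r))
          = G q * ∑ p, ∑ r, f p q r • (x p * x r) := by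
            rw [Finset.mul_sum]
            refine Finset.sum_congr rfl fun p _ => ?_
            rw [Finset.mul_sum]
            exact Finset.sum_congr rfl fun r _ => (mul_smul_comm _ _ _).symm
        _ = G q * ((2:ℝ) • G q) := by
            have hx2 : (∑ p, ∑ r, f p q r • (x p * x r)) = (2:ℝ) • G q := by
              calc ∑ p, ∑ r, f p q r • (x p * x r)
                  = - ∑ p, ∑ r, f q p r • (x p * x r) := by
                    rw [← Finset.sum_neg_distrib]
                    refine Finset.sum_congr rfl fun p _ => ?_
                    rw [← Finset.sum_neg_distrib]
                    refine Finset.sum_congr rfl fun r _ => ?_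
                    rw [show f p q r = -(f q p r) from by rw [hanti1 p q r]; ring, neg_smul]
                _ = - ((-2:ℝ) • G q) := by rw [hGm q]
                _ = (2:ℝ) • G q := by module
            rw [hx2]
        _ = (2:ℝ) • (G q * G q) := mul_smul_comm _ _ _
    have step3 : (∑ p, ∑ q, ∑ r, ∑ c, (f p q r * f q p c) • (x c * x r))
        = - ∑ p, ∑ q, ∑ r, ∑ c, (f p q r * f p q c) • (x c * x r) := by
      rw [← Finset.sum_neg_distrib]
      refine Finset.sum_congr rfl fun p _ => ?_
      rw [← Finset.sum_neg_distrib]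
      refine Finset.sum_congr rfl fun q _ => ?_
      rw [← Finset.sum_neg_distrib]
      refine Finset.sum_congr rfl fun r _ => ?_
      rw [← Finset.sum_neg_distrib]
      refine Finset.sum_congr rfl fun c _ => ?_
      rw [hanti1 q p c, mul_neg, neg_smul, neg_neg]
    rw [step1, step2, step3]
  rw [hsum, hS1, hS2, hS3]
  module

private theorem k_eval'
    (hswap : ∀ a b, x a * x b = (if a = b then (1:ℝ) else 0) • 1 - x b * x a) :
    ∑ p, ∑ q, ∑ r, ∑ c, (f p q r * f p q c) • (x c * x r)
      = ((1/2:ℝ) * ∑ a, ∑ b, ∑ c, (f a b c)^2) • (1:A) := by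
  have anti : ∀ c r, x c * x r + x r * x c = (if c = r then (1:ℝ) else 0) • 1 := by
    intro c r; rw [hswap c r]; abel
  have swapK : ∑ p, ∑ q, ∑ r, ∑ c, (f p q r * f p q c) • (x c * x r)
      = ∑ p, ∑ q, ∑ r, ∑ c, (f p q r * f p q c) • (x r * x c) := by
    refine Finset.sum_congr rfl fun p _ => Finset.sum_congr rfl fun q _ => ?_
    rw [Finset.sum_comm]
    exact Finset.sum_congr rfl fun r _ => Finset.sum_congr rfl fun c _ => by rw [mul_comm]
  have h2K : (∑ p, ∑ q, ∑ r, ∑ c, (f p q r * f p q c) • (x c * x r))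
      + (∑ p, ∑ q, ∑ r, ∑ c, (f p q r * f p q c) • (x c * x r))
      = (∑ a, ∑ b, ∑ c, (f a b c)^2) • (1:A) := by
    calc (∑ p, ∑ q, ∑ r, ∑ c, (f p q r * f p q c) • (x c * x r))
        + (∑ p, ∑ q, ∑ r, ∑ c, (f p q r * f p q c) • (x c * x r))
        = ∑ p, ∑ q, ∑ r, ∑ c, (f p q r * f p q c) • ((if c = r then (1:ℝ) else 0) • (1:A)) := by
          nth_rewrite 2 [swapK]
          rw [← Finset.sum_add_distrib]
          refine Finset.sum_congr rfl fun p _ => ?_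
          rw [← Finset.sum_add_distrib]
          refine Finset.sum_congr rfl fun q _ => ?_
          rw [← Finset.sum_add_distrib]
          refine Finset.sum_congr rfl fun r _ => ?_
          rw [← Finset.sum_add_distrib]
          refine Finset.sum_congr rfl fun c _ => ?_
          rw [← smul_add, anti c r]
      _ = ∑ p, ∑ q, ∑ r, (f p q r * f p q r) • (1:A) := by
          simp only [ite_smul, one_smul, zero_smul, smul_ite, smul_zero,
            Finset.sum_ite_eq', Finset.mem_univ, if_true]
      _ = (∑ a, ∑ b, ∑ c, (f a b c)^2) • (1:A) := by
          simp only [Finset.sum_smul]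
          refine Finset.sum_congr rfl fun p _ => Finset.sum_congr rfl fun q _ =>
            Finset.sum_congr rfl fun r _ => ?_
          rw [sq]
  calc ∑ p, ∑ q, ∑ r, ∑ c, (f p q r * f p q c) • (x c * x r)
      = (1/2:ℝ) • ((∑ p, ∑ q, ∑ r, ∑ c, (f p q r * f p q c) • (x c * x r))
        + ∑ p, ∑ q, ∑ r, ∑ c, (f p q r * f p q c) • (x c * x r)) := by module
    _ = (1/2:ℝ) • ((∑ a, ∑ b, ∑ c, (f a b c)^2) • (1:A)) := by rw [h2K]
    _ = ((1/2:ℝ) * ∑ a, ∑ b, ∑ c, (f a b c)^2) • (1:A) := by rw [smul_smul]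

private theorem gammaSq
    (hanti1 : ∀ a b c, f b a c = - f a b c)
    (hanti2 : ∀ a b c, f a c b = - f a b c)
    (hjac0 : ∀ a b c d, (∑ k, f b c k * f a k d) = ∑ k, (f a b k * f k c d + f a c k * f b k d))
    (hswap : ∀ a b, x a * x b = (if a = b then (1:ℝ) else 0) • 1 - x b * x a)
    (hγ : γ = (-(1/6:ℝ)) • ∑ a, ∑ b, ∑ c, f a b c • (x a * x b * x c)) :
    γ * γ = (-(1/48:ℝ) * ∑ a, ∑ b, ∑ c, (f a b c)^2) • (1:A) := by
  obtain ⟨G, hG⟩ : ∃ G : Fin n → A, ∀ a, G a = (-(1/2:ℝ)) • ∑ r, ∑ s, f a r s • (x r * x s) :=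
    ⟨_, fun a => rfl⟩
  have hcyc : ∀ a b c, f a b c = f b c a := by
    intro a b c
    have h1 := hanti2 b a c
    have h2 := hanti1 a b c
    linarith
  have hgx := gx_comm' x f G hanti2 hswap hG
  have hxγ := xgamma_anti' x f G γ hanti1 hcyc hswap hG hγ
  have hGγ := g_gamma_comm' x f G γ hanti2 hjac0 hgx hγ
  have h3 := xg3' x f G γ hG hγ
  have e1 := eq_one' x G γ hxγ hGγ h3
  have e2 := eq_two' x f G γ hanti1 hcyc hG hgx hxγ hγ
  have kk := k_eval' x f hswap
  rw [← e1] at e2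
  have h4 : (2:ℝ) • (γ * γ) - (6:ℝ) • (γ * γ)
      = (1/6:ℝ) • ∑ p, ∑ q, ∑ r, ∑ c, (f p q r * f p q c) • (x c * x r) :=
    sub_eq_iff_eq_add'.mpr e2
  have h6 : (-4:ℝ) • (γ * γ)
      = (1/6:ℝ) • ∑ p, ∑ q, ∑ r, ∑ c, (f p q r * f p q c) • (x c * x r) := by
    rw [← h4]; module
  calc γ * γ = (-(1/4:ℝ)) • ((-4:ℝ) • (γ * γ)) := by module
    _ = (-(1/4:ℝ)) • ((1/6:ℝ) • ∑ p, ∑ q, ∑ r, ∑ c, (f p q r * f p q c) • (x c * x r)) := by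
        rw [h6]
    _ = (-(1/4:ℝ)) • ((1/6:ℝ) • (((1/2:ℝ) * ∑ a, ∑ b, ∑ c, (f a b c)^2) • (1:A))) := by
        rw [kk]
    _ = (-(1/48:ℝ) * ∑ a, ∑ b, ∑ c, (f a b c)^2) • (1:A) := by module

end DiracAux

section TensorAux

variable {n : ℕ} {B C : Type*} [Ring B] [Algebra ℝ B] [Ring C] [Algebra ℝ C]

private theorem tensor_assembly (f : Fin n → Fin n → Fin n → ℝ)
    (u : Fin n → B) (x : Fin n → C) (G : Fin n → C) (γ : C)
    (hcyc : ∀ a b c, f a b c = f b c a)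
    (hswap : ∀ a b, x a * x b = (if a = b then (1:ℝ) else 0) • 1 - x b * x a)
    (hcomm_u : ∀ a b, u a * u b = u b * u a + ∑ c, f a b c • u c)
    (hG : ∀ a, G a = (-(1/2:ℝ)) • ∑ r, ∑ s, f a r s • (x r * x s))
    (hxγ : ∀ a, x a * γ + γ * x a = G a)
    (hγsq : γ * γ = (-(1/48:ℝ) * ∑ a, ∑ b, ∑ c, (f a b c)^2) • (1:C)) :
    (∑ a, u a ⊗ₜ[ℝ] x a + 1 ⊗ₜ[ℝ] γ) * (∑ a, u a ⊗ₜ[ℝ] x a + 1 ⊗ₜ[ℝ] γ)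
      = (1 / 2 : ℝ) • ∑ a, (u a * u a) ⊗ₜ[ℝ] (1 : C)
        - ((1 / 48 : ℝ) * ∑ a, ∑ b, ∑ c, (f a b c) ^ 2) • (1 : B ⊗[ℝ] C) := by
  set P : B ⊗[ℝ] C := ∑ a, u a ⊗ₜ[ℝ] x a with hP
  set F2 : B ⊗[ℝ] C := ∑ a, ∑ r, ∑ s, f a r s • (u a ⊗ₜ[ℝ] (x r * x s)) with hF2
  have hPP : P * P = (1/2:ℝ) • (∑ a, (u a * u a) ⊗ₜ[ℝ] (1:C)) + (1/2:ℝ) • F2 := by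
    have hA0 : P * P = ∑ a, ∑ b, (u a * u b) ⊗ₜ[ℝ] (x a * x b) := by
      rw [hP, Finset.sum_mul_sum]
      exact Finset.sum_congr rfl fun a _ => Finset.sum_congr rfl fun b _ =>
        Algebra.TensorProduct.tmul_mul_tmul _ _ _ _
    have hF : (∑ a, ∑ b, ∑ c, f a b c • ((u c) ⊗ₜ[ℝ] (x a * x b))) = F2 := by
      rw [sum3_rot (fun a b c => f a b c • ((u c) ⊗ₜ[ℝ] (x a * x b))), hF2]
      refine Finset.sum_congr rfl fun c _ => Finset.sum_congr rfl fun a _ =>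
        Finset.sum_congr rfl fun b _ => ?_
      rw [hcyc a b c, hcyc b c a]
    have step1 : (∑ a, ∑ b, (u a * u b) ⊗ₜ[ℝ] (x a * x b))
        = (∑ a, ∑ b, (u b * u a) ⊗ₜ[ℝ] (x a * x b))
          + ∑ a, ∑ b, ∑ c, f a b c • ((u c) ⊗ₜ[ℝ] (x a * x b)) := by
      rw [← Finset.sum_add_distrib]
      refine Finset.sum_congr rfl fun a _ => ?_
      rw [← Finset.sum_add_distrib]
      refine Finset.sum_congr rfl fun b _ => ?_
      rw [hcomm_u a b, TensorProduct.add_tmul, TensorProduct.sum_tmul]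
      congr 1
    have step2 : (∑ a, ∑ b, (u b * u a) ⊗ₜ[ℝ] (x a * x b))
        = (∑ a, (u a * u a) ⊗ₜ[ℝ] (1:C))
          - ∑ a, ∑ b, (u a * u b) ⊗ₜ[ℝ] (x a * x b) := by
      have e1 : (∑ a, ∑ b, (u b * u a) ⊗ₜ[ℝ] (x a * x b))
          = (∑ a, ∑ b, (if a = b then (1:ℝ) else 0) • ((u b * u a) ⊗ₜ[ℝ] (1:C)))
            - ∑ a, ∑ b, (u b * u a) ⊗ₜ[ℝ] (x b * x a) := by
        rw [← Finset.sum_sub_distrib]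
        refine Finset.sum_congr rfl fun a _ => ?_
        rw [← Finset.sum_sub_distrib]
        refine Finset.sum_congr rfl fun b _ => ?_
        rw [hswap a b, TensorProduct.tmul_sub, TensorProduct.tmul_smul]
      have e2 : (∑ a, ∑ b, (if a = b then (1:ℝ) else 0) • ((u b * u a) ⊗ₜ[ℝ] (1:C)))
          = ∑ a, (u a * u a) ⊗ₜ[ℝ] (1:C) := by
        refine Finset.sum_congr rfl fun a _ => ?_
        rw [show (∑ b, (if a = b then (1:ℝ) else 0) • ((u b * u a) ⊗ₜ[ℝ] (1:C)))
            = ∑ b, (if a = b then (u b * u a) ⊗ₜ[ℝ] (1:C) else 0) from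
          Finset.sum_congr rfl fun b _ => by by_cases h : a = b <;> simp [h]]
        simp [Finset.sum_ite_eq, Finset.mem_univ]
      have e3 : (∑ a, ∑ b, (u b * u a) ⊗ₜ[ℝ] (x b * x a))
          = ∑ a, ∑ b, (u a * u b) ⊗ₜ[ℝ] (x a * x b) := Finset.sum_comm
      rw [e1, e2, e3]
    have h2 : (∑ a, ∑ b, (u a * u b) ⊗ₜ[ℝ] (x a * x b))
        + (∑ a, ∑ b, (u a * u b) ⊗ₜ[ℝ] (x a * x b))
        = (∑ a, (u a * u a) ⊗ₜ[ℝ] (1:C)) + F2 := by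
      nth_rewrite 1 [step1]
      rw [step2, hF]
      abel
    rw [hA0]
    calc (∑ a, ∑ b, (u a * u b) ⊗ₜ[ℝ] (x a * x b))
        = (1/2:ℝ) • ((∑ a, ∑ b, (u a * u b) ⊗ₜ[ℝ] (x a * x b))
            + (∑ a, ∑ b, (u a * u b) ⊗ₜ[ℝ] (x a * x b))) := by module
      _ = (1/2:ℝ) • ((∑ a, (u a * u a) ⊗ₜ[ℝ] (1:C)) + F2) := by rw [h2]
      _ = (1/2:ℝ) • (∑ a, (u a * u a) ⊗ₜ[ℝ] (1:C)) + (1/2:ℝ) • F2 := smul_add _ _ _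
  have hcross : P * (1 ⊗ₜ[ℝ] γ) + (1 ⊗ₜ[ℝ] γ) * P = (-(1/2:ℝ)) • F2 := by
    have c1 : P * (1 ⊗ₜ[ℝ] γ) = ∑ a, u a ⊗ₜ[ℝ] (x a * γ) := by
      rw [hP, Finset.sum_mul]
      exact Finset.sum_congr rfl fun a _ => by
        rw [Algebra.TensorProduct.tmul_mul_tmul, mul_one]
    have c2 : (1 ⊗ₜ[ℝ] γ) * P = ∑ a, u a ⊗ₜ[ℝ] (γ * x a) := by
      rw [hP, Finset.mul_sum]
      exact Finset.sum_congr rfl fun a _ => by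
        rw [Algebra.TensorProduct.tmul_mul_tmul, one_mul]
    rw [c1, c2, ← Finset.sum_add_distrib]
    calc ∑ a, (u a ⊗ₜ[ℝ] (x a * γ) + u a ⊗ₜ[ℝ] (γ * x a))
        = ∑ a, u a ⊗ₜ[ℝ] G a := by
          refine Finset.sum_congr rfl fun a _ => ?_
          rw [← TensorProduct.tmul_add, hxγ a]
      _ = ∑ a, (-(1/2:ℝ)) • ∑ r, ∑ s, f a r s • (u a ⊗ₜ[ℝ] (x r * x s)) := by
          refine Finset.sum_congr rfl fun a _ => ?_
          rw [hG a, TensorProduct.tmul_smul]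
          congr 1
          rw [TensorProduct.tmul_sum]
          refine Finset.sum_congr rfl fun r _ => ?_
          rw [TensorProduct.tmul_sum]
          exact Finset.sum_congr rfl fun s _ => TensorProduct.tmul_smul _ _ _
      _ = (-(1/2:ℝ)) • F2 := by rw [hF2, Finset.smul_sum]
  have hγγ : (1 ⊗ₜ[ℝ] γ : B ⊗[ℝ] C) * (1 ⊗ₜ[ℝ] γ)
      = (-(1/48:ℝ) * ∑ a, ∑ b, ∑ c, (f a b c)^2) • (1 : B ⊗[ℝ] C) := by
    rw [Algebra.TensorProduct.tmul_mul_tmul, mul_one, hγsq, TensorProduct.tmul_smul,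
      ← Algebra.TensorProduct.one_def]
  calc (P + 1 ⊗ₜ[ℝ] γ) * (P + 1 ⊗ₜ[ℝ] γ)
      = P * P + (P * (1 ⊗ₜ[ℝ] γ) + (1 ⊗ₜ[ℝ] γ) * P) + (1 ⊗ₜ[ℝ] γ) * (1 ⊗ₜ[ℝ] γ) := by
        noncomm_ring
    _ = ((1/2:ℝ) • (∑ a, (u a * u a) ⊗ₜ[ℝ] (1:C)) + (1/2:ℝ) • F2)
          + (-(1/2:ℝ)) • F2
          + (-(1/48:ℝ) * ∑ a, ∑ b, ∑ c, (f a b c)^2) • (1 : B ⊗[ℝ] C) := by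
        rw [hPP, hcross, hγγ]
    _ = (1 / 2 : ℝ) • ∑ a, (u a * u a) ⊗ₜ[ℝ] (1 : C)
        - ((1 / 48 : ℝ) * ∑ a, ∑ b, ∑ c, (f a b c) ^ 2) • (1 : B ⊗[ℝ] C) := by
        module

end TensorAux

/-- In `𝒲 = U(𝔤) ⊗ Cl(𝔤)`, the Dirac element `𝔇 = ∑ u_a ⊗ x_a + 1 ⊗ γ`
satisfies `𝔇² = ½ ∑ (u_a u_a) ⊗ 1 − (1/48)(∑ f_{abc}²)·(1 ⊗ 1)`. -/
theorem dirac_square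
    {n : ℕ} {g : Type*} [LieRing g] [LieAlgebra ℝ g]
    -- the ad-invariant inner product, as a symmetric bilinear form
    (ip : LinearMap.BilinForm ℝ g)
    (ip_symm : ∀ v w : g, ip v w = ip w v)
    (ip_inv : ∀ v w z : g, ip ⁅v, w⁆ z + ip w ⁅v, z⁆ = 0)
    -- an orthonormal basis
    (e : Module.Basis (Fin n) ℝ g)
    (he : ∀ a b, ip (e a) (e b) = if a = b then (1 : ℝ) else 0)
    -- the quadratic form Q(v) = ½⟨v,v⟩ and its Clifford algebra
    (Q : QuadraticForm ℝ g)
    (hQ : ∀ v, Q v = (1 / 2 : ℝ) * ip v v)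
    -- structure constants
    (f : Fin n → Fin n → Fin n → ℝ)
    (hf : ∀ a b c, f a b c = ip ⁅e a, e b⁆ (e c))
    -- the Clifford generators
    (x : Fin n → CliffordAlgebra Q)
    (hx : ∀ a, x a = CliffordAlgebra.ι Q (e a))
    -- the element γ
    (γ : CliffordAlgebra Q)
    (hγ : γ = (-(1 / 6 : ℝ)) • ∑ a, ∑ b, ∑ c, f a b c • (x a * x b * x c))
    -- the generators of the universal enveloping algebra
    (u : Fin n → UniversalEnvelopingAlgebra ℝ g)
    (hu : ∀ a, u a = UniversalEnvelopingAlgebra.ι ℝ (e a))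
    -- the Dirac element 𝔇 in 𝒲 = U(𝔤) ⊗ Cl(𝔤)
    (D : UniversalEnvelopingAlgebra ℝ g ⊗[ℝ] CliffordAlgebra Q)
    (hD : D = ∑ a, u a ⊗ₜ[ℝ] x a + 1 ⊗ₜ[ℝ] γ)
    :
    D * D = (1 / 2 : ℝ) • ∑ a, (u a * u a) ⊗ₜ[ℝ] (1 : CliffordAlgebra Q)
      - ((1 / 48 : ℝ) * ∑ a, ∑ b, ∑ c, (f a b c) ^ 2) •
        (1 : UniversalEnvelopingAlgebra ℝ g ⊗[ℝ] CliffordAlgebra Q) := by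
  -- the Clifford exchange relation
  have hswap : ∀ a b, x a * x b = (if a = b then (1:ℝ) else 0) • 1 - x b * x a := by
    intro a b
    have hpol : QuadraticMap.polar (⇑Q) (e a) (e b) = if a = b then (1:ℝ) else 0 := by
      rcases eq_or_ne a b with h | h
      · subst h
        simp only [QuadraticMap.polar, hQ, map_add, LinearMap.add_apply, he, if_pos rfl]
        ring
      · simp only [QuadraticMap.polar, hQ, map_add, LinearMap.add_apply, he, if_neg h,
          if_neg (Ne.symm h), if_pos rfl]
        ring
    have h := CliffordAlgebra.ι_mul_ι_add_swap (Q := Q) (e a) (e b)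
    rw [hpol] at h
    rw [hx a, hx b]
    rw [eq_sub_iff_add_eq, Algebra.algebraMap_eq_smul_one] at *
    exact h
  -- antisymmetries
  have hanti1 : ∀ a b c, f b a c = - f a b c := by
    intro a b c
    rw [hf, hf, show ⁅e b, e a⁆ = -⁅e a, e b⁆ from by rw [← lie_skew], map_neg,
      LinearMap.neg_apply]
  have hanti2 : ∀ a b c, f a c b = - f a b c := by
    intro a b c
    have h := ip_inv (e a) (e b) (e c)
    rw [hf, hf, ip_symm ⁅e a, e c⁆ (e b)]
    linarith [ip_symm (e b) ⁅e a, e c⁆]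
  have hcyc : ∀ a b c, f a b c = f b c a := by
    intro a b c
    have h1 := hanti2 b a c
    have h2 := hanti1 a b c
    linarith
  -- bracket expansion and Jacobi identity in coordinates
  have hrep : ∀ v c, ip v (e c) = e.repr v c := by
    intro v c
    conv_lhs => rw [← e.sum_repr v]
    simp [map_sum, he, Finset.sum_ite_eq', mul_comm, -Module.Basis.sum_repr]
  have hbrkt : ∀ a b, ⁅e a, e b⁆ = ∑ c, f a b c • e c := by
    intro a b
    conv_lhs => rw [← e.sum_repr ⁅e a, e b⁆]
    refine Finset.sum_congr rfl fun c _ => ?_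
    rw [← hrep, ← hf]
  have lie_sum' : ∀ (v : g) (F : Fin n → g), ⁅v, ∑ k, F k⁆ = ∑ k, ⁅v, F k⁆ := fun v F =>
    map_sum (AddMonoidHom.mk' (fun y => ⁅v, y⁆) (lie_add v)) F Finset.univ
  have sum_lie' : ∀ (v : g) (F : Fin n → g), ⁅∑ k, F k, v⁆ = ∑ k, ⁅F k, v⁆ := fun v F =>
    map_sum (AddMonoidHom.mk' (fun y => ⁅y, v⁆) (fun p q => add_lie p q v)) F Finset.univ
  have hjac0 : ∀ a b c d, (∑ k, f b c k * f a k d)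
      = ∑ k, (f a b k * f k c d + f a c k * f b k d) := by
    intro a b c d
    have lhs_eq : ip ⁅e a, ⁅e b, e c⁆⁆ (e d) = ∑ k, f b c k * f a k d := by
      rw [hbrkt b c, lie_sum']
      rw [map_sum, LinearMap.sum_apply]
      refine Finset.sum_congr rfl fun k _ => ?_
      rw [lie_smul, map_smul, LinearMap.smul_apply, smul_eq_mul, ← hf]
    have r1 : ip ⁅⁅e a, e b⁆, e c⁆ (e d) = ∑ k, f a b k * f k c d := by
      rw [hbrkt a b, sum_lie']
      rw [map_sum, LinearMap.sum_apply]
      refine Finset.sum_congr rfl fun k _ => ?_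
      rw [smul_lie, map_smul, LinearMap.smul_apply, smul_eq_mul, ← hf]
    have r2 : ip ⁅e b, ⁅e a, e c⁆⁆ (e d) = ∑ k, f a c k * f b k d := by
      rw [hbrkt a c, lie_sum']
      rw [map_sum, LinearMap.sum_apply]
      refine Finset.sum_congr rfl fun k _ => ?_
      rw [lie_smul, map_smul, LinearMap.smul_apply, smul_eq_mul, ← hf]
    rw [← lhs_eq, leibniz_lie (e a) (e b) (e c), map_add, LinearMap.add_apply, r1, r2,
      Finset.sum_add_distrib]
  -- the commutation relation in U(g)
  have hcomm_u : ∀ a b, u a * u b = u b * u a + ∑ c, f a b c • u c := by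
    intro a b
    letI : LieRing (UniversalEnvelopingAlgebra ℝ g) := LieRing.ofAssociativeRing
    letI : LieAlgebra ℝ (UniversalEnvelopingAlgebra ℝ g) := LieAlgebra.ofAssociativeAlgebra
    have h : UniversalEnvelopingAlgebra.ι ℝ ⁅e a, e b⁆ = u a * u b - u b * u a := by
      rw [LieHom.map_lie, hu, hu, Ring.lie_def]
    have hmap : (UniversalEnvelopingAlgebra.ι ℝ) (∑ c, f a b c • e c) = ∑ c, f a b c • u c := by
      rw [← LieHom.coe_toLinearMap, map_sum]
      exact Finset.sum_congr rfl fun c _ => by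
        rw [map_smul, LieHom.coe_toLinearMap, hu]
    rw [hbrkt a b, hmap] at h
    rw [h]; abel
  -- γ²
  have hγsq := gammaSq x f γ hanti1 hanti2 hjac0 hswap hγ
  -- the element G and the anticommutation relation
  obtain ⟨G, hG⟩ : ∃ G : Fin n → CliffordAlgebra Q,
      ∀ a, G a = (-(1/2:ℝ)) • ∑ r, ∑ s, f a r s • (x r * x s) := ⟨_, fun a => rfl⟩
  have hxγ := xgamma_anti' x f G γ hanti1 hcyc hswap hG hγ
  -- assembly
  rw [hD]
  exact tensor_assembly f u x G γ hcyc hswap hcomm_u hG hxγ hγsq
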